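/- Let S be the ring of proper stable real rational functions. For any nonzero rational function T ∈ ℝ(s), there exist n, d ∈ S with d ≠ 0, T = n/d, and n·x + d·y = 1 for some x, y ∈ S; moreover if T is proper, d can be chosen with no zero at infinity. -/

import Mathlib

open Polynomial

/-- `f` is a proper stable real rational function: no poles in the closed right
half-plane and no pole at infinity. -/
def ProperStable (f : RatFunc ℝ) : Prop :=
  (∀ z : ℂ, 0 ≤ z.re → Polynomial.eval z (f.denom.map (algebraMap ℝ ℂ)) ≠ 0) ∧
  f.num.degree ≤ f.denom.degree

noncomputable section
abbrev uu : ℝ[X] := X + C 1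

lemma uu_monic : (uu).Monic := monic_X_add_C 1
lemma uu_prime : Prime (uu) := by
  have : (uu : ℝ[X]) = X - C (-1) := by simp [uu]
  rw [this]; exact prime_X_sub_C (-1)
lemma uu_natdeg : (uu).natDegree = 1 := by
  simp [natDegree_X_add_C (x := (1:ℝ))]
lemma uu_pow_deg (k : ℕ) : (uu ^ k).degree = (k : WithBot ℕ) := by
  rw [degree_eq_natDegree (pow_ne_zero _ uu_monic.ne_zero), natDegree_pow, uu_natdeg, mul_one]

lemma key_num_denom (c : ℝ[X]) (j : ℕ) :
    ∃ i ≤ j, uu ^ i ∣ c ∧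
      (algebraMap ℝ[X] (RatFunc ℝ) c / algebraMap ℝ[X] (RatFunc ℝ) (uu ^ j)).num = c / uu ^ i ∧
      (algebraMap ℝ[X] (RatFunc ℝ) c / algebraMap ℝ[X] (RatFunc ℝ) (uu ^ j)).denom
        = uu ^ (j - i) := by
  obtain ⟨i, hij, hass⟩ := (dvd_prime_pow uu_prime j).mp (gcd_dvd_right c (uu ^ j))
  have hg : gcd c (uu ^ j) = uu ^ i := by
    rw [← normalize_gcd, normalize_eq_normalize hass.dvd hass.symm.dvd,
      (uu_monic.pow i).normalize_eq_self]
  have hdiv : uu ^ j / uu ^ i = uu ^ (j - i) := by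
    have h1 := EuclideanDomain.mul_div_cancel' (pow_ne_zero i uu_monic.ne_zero)
      (pow_dvd_pow uu hij)
    have h2 : uu ^ i * uu ^ (j - i) = uu ^ j := by
      rw [mul_comm]; exact pow_sub_mul_pow uu hij
    exact mul_left_cancel₀ (pow_ne_zero i uu_monic.ne_zero) (h1.trans h2.symm)
  have hlc : (uu ^ j / gcd c (uu ^ j)).leadingCoeff = 1 := by
    rw [hg, hdiv]; exact (uu_monic.pow _).leadingCoeff
  refine ⟨i, hij, hg ▸ gcd_dvd_left c (uu ^ j), ?_, ?_⟩
  · rw [RatFunc.num_div, hlc, hg]; simp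
  · rw [RatFunc.denom_div _ (pow_ne_zero _ uu_monic.ne_zero), hlc, hg, hdiv]; simp

lemma stable_of_div (c : ℝ[X]) (j : ℕ) (h : c.degree ≤ (j : WithBot ℕ)) :
    ProperStable (algebraMap ℝ[X] (RatFunc ℝ) c / algebraMap ℝ[X] (RatFunc ℝ) (uu ^ j)) ∧
    (c.degree = (j : WithBot ℕ) →
      (algebraMap ℝ[X] (RatFunc ℝ) c / algebraMap ℝ[X] (RatFunc ℝ) (uu ^ j)).num.degree =
      (algebraMap ℝ[X] (RatFunc ℝ) c / algebraMap ℝ[X] (RatFunc ℝ) (uu ^ j)).denom.degree) := by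
  obtain ⟨i, hij, hdvd, hnum, hdenom⟩ := key_num_denom c j
  have heval : ∀ z : ℂ, 0 ≤ z.re →
      Polynomial.eval z (((algebraMap ℝ[X] (RatFunc ℝ) c /
        algebraMap ℝ[X] (RatFunc ℝ) (uu ^ j)).denom).map (algebraMap ℝ ℂ)) ≠ 0 := by
    intro z hz
    rw [hdenom]
    have hz1 : z + 1 ≠ 0 := by
      intro hc
      have := congrArg Complex.re hc
      simp at this
      linarith
    simp only [Polynomial.map_pow, Polynomial.map_add, Polynomial.map_X, Polynomial.map_C,
      Polynomial.map_one, eval_pow, eval_add, eval_X, eval_C, eval_one, map_one]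
    exact pow_ne_zero _ hz1
  by_cases hc0 : c = 0
  · subst hc0
    constructor
    · refine ⟨heval, ?_⟩
      rw [hnum, EuclideanDomain.zero_div]
      simp
    · intro hdeg
      simp [degree_zero] at hdeg
  · obtain ⟨c', hc'⟩ := hdvd
    have hc'0 : c' ≠ 0 := by rintro rfl; simp at hc'; exact hc0 hc'
    have hqdiv : c / uu ^ i = c' := by
      have h1 := EuclideanDomain.mul_div_cancel' (pow_ne_zero i uu_monic.ne_zero) ⟨c', hc'⟩
      exact mul_left_cancel₀ (pow_ne_zero i uu_monic.ne_zero) (h1.trans hc')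
    have hnd : c.natDegree = i + c'.natDegree := by
      rw [hc', natDegree_mul (pow_ne_zero _ uu_monic.ne_zero) hc'0, natDegree_pow, uu_natdeg,
        mul_one]
    have hcj : c.natDegree ≤ j := natDegree_le_iff_degree_le.mpr h
    have hnumdeg : (algebraMap ℝ[X] (RatFunc ℝ) c /
        algebraMap ℝ[X] (RatFunc ℝ) (uu ^ j)).num.degree = (c'.natDegree : WithBot ℕ) := by
      rw [hnum, hqdiv, degree_eq_natDegree hc'0]
    have hdenomdeg : (algebraMap ℝ[X] (RatFunc ℝ) c /
        algebraMap ℝ[X] (RatFunc ℝ) (uu ^ j)).denom.degree = ((j - i : ℕ) : WithBot ℕ) := by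
      rw [hdenom, uu_pow_deg]
    constructor
    · refine ⟨heval, ?_⟩
      rw [hnumdeg, hdenomdeg, Nat.cast_le]
      omega
    · intro hdeg
      have : c.natDegree = j := natDegree_eq_of_degree_eq_some hdeg
      rw [hnumdeg, hdenomdeg, Nat.cast_inj]
      omega

lemma bezout_pow (p q a b : ℝ[X]) (hq : q ≠ 0) (hab : a * p + b * q = 1) (m : ℕ)
    (hp : p.degree ≤ (m : WithBot ℕ)) (hqd : q.degree = (m : WithBot ℕ)) :
    ∃ r e : ℝ[X], p * r + q * e = uu ^ (2 * m) ∧ r.degree ≤ (m : WithBot ℕ) ∧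
      e.degree ≤ (m : WithBot ℕ) := by
  set w : ℝ[X] := uu ^ (2 * m) with hw
  refine ⟨a * w % q, b * w + p * (a * w / q), ?_, ?_, ?_⟩
  · have h1 : q * (a * w / q) + a * w % q = a * w := EuclideanDomain.div_add_mod _ _
    linear_combination w * hab + p * h1
  · have : (a * w % q).degree < q.degree := EuclideanDomain.mod_lt _ hq
    rw [hqd] at this
    exact le_of_lt this
  · set e : ℝ[X] := b * w + p * (a * w / q) with he
    have key : p * (a * w % q) + q * e = w := by
      have h1 : q * (a * w / q) + a * w % q = a * w := EuclideanDomain.div_add_mod _ _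
      rw [he]; linear_combination w * hab + p * h1
    have hqe : q * e = w - p * (a * w % q) := by linear_combination key
    have hrm : (a * w % q).degree ≤ (m : WithBot ℕ) := by
      have : (a * w % q).degree < q.degree := EuclideanDomain.mod_lt _ hq
      rw [hqd] at this; exact le_of_lt this
    have hqe_deg : (q * e).degree ≤ ((2 * m : ℕ) : WithBot ℕ) := by
      rw [hqe]
      refine (degree_sub_le _ _).trans (max_le ?_ ?_)
      · rw [hw, uu_pow_deg]
      · rw [degree_mul]
        calc p.degree + (a * w % q).degree ≤ (m : WithBot ℕ) + (m : WithBot ℕ) :=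
              add_le_add hp hrm
          _ = ((2 * m : ℕ) : WithBot ℕ) := by rw [← Nat.cast_add]; congr 1; omega
    by_cases he0 : e = 0
    · rw [he0]; simp
    · rw [degree_mul, hqd, degree_eq_natDegree he0, ← Nat.cast_add, Nat.cast_le] at hqe_deg
      rw [degree_eq_natDegree he0, Nat.cast_le]
      omega

lemma main_div_eq (p q : ℝ[X]) (hq : q ≠ 0) (m : ℕ) :
    algebraMap ℝ[X] (RatFunc ℝ) p / algebraMap ℝ[X] (RatFunc ℝ) (uu ^ m) /
      (algebraMap ℝ[X] (RatFunc ℝ) q / algebraMap ℝ[X] (RatFunc ℝ) (uu ^ m)) =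
    algebraMap ℝ[X] (RatFunc ℝ) p / algebraMap ℝ[X] (RatFunc ℝ) q := by
  rw [div_div_div_comm, div_self (RatFunc.algebraMap_ne_zero (pow_ne_zero _ uu_monic.ne_zero)),
    div_one]

lemma main_sum_eq (p q r e : ℝ[X]) (m : ℕ) (h : p * r + q * e = uu ^ (2 * m)) :
    algebraMap ℝ[X] (RatFunc ℝ) p / algebraMap ℝ[X] (RatFunc ℝ) (uu ^ m) *
      (algebraMap ℝ[X] (RatFunc ℝ) r / algebraMap ℝ[X] (RatFunc ℝ) (uu ^ m)) +
    algebraMap ℝ[X] (RatFunc ℝ) q / algebraMap ℝ[X] (RatFunc ℝ) (uu ^ m) *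
      (algebraMap ℝ[X] (RatFunc ℝ) e / algebraMap ℝ[X] (RatFunc ℝ) (uu ^ m)) = 1 := by
  rw [div_mul_div_comm, div_mul_div_comm, ← map_mul, ← map_mul, ← map_mul, ← add_div,
    ← map_add, h, ← pow_add]
  have : m + m = 2 * m := by omega
  rw [this, div_self (RatFunc.algebraMap_ne_zero (pow_ne_zero _ uu_monic.ne_zero))]

theorem coprime_fraction_exists (T : RatFunc ℝ) (hT : T ≠ 0) :
    ∃ n d x y : RatFunc ℝ, ProperStable n ∧ ProperStable d ∧ ProperStable x ∧
      ProperStable y ∧ d ≠ 0 ∧ T = n / d ∧ n * x + d * y = 1 ∧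
      (T.num.degree ≤ T.denom.degree → d.num.degree = d.denom.degree) := by
  set p := T.num with hpdef
  set q := T.denom with hqdef
  have hp0 : p ≠ 0 := RatFunc.num_ne_zero hT
  have hq0 : q ≠ 0 := T.denom_ne_zero
  obtain ⟨a, b, hab⟩ := T.isCoprime_num_denom
  have hTeq : T = algebraMap ℝ[X] (RatFunc ℝ) p / algebraMap ℝ[X] (RatFunc ℝ) q :=
    (RatFunc.num_div_denom T).symm
  by_cases hprop : p.degree ≤ q.degree
  · set m := q.natDegree with hm
    have hqd : q.degree = (m : WithBot ℕ) := degree_eq_natDegree hq0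
    have hpm : p.degree ≤ (m : WithBot ℕ) := hprop.trans hqd.le
    obtain ⟨r, e, hre, hrm, hem⟩ := bezout_pow p q a b hq0 hab m hpm hqd
    refine ⟨algebraMap ℝ[X] (RatFunc ℝ) p / algebraMap ℝ[X] (RatFunc ℝ) (uu ^ m),
      algebraMap ℝ[X] (RatFunc ℝ) q / algebraMap ℝ[X] (RatFunc ℝ) (uu ^ m),
      algebraMap ℝ[X] (RatFunc ℝ) r / algebraMap ℝ[X] (RatFunc ℝ) (uu ^ m),
      algebraMap ℝ[X] (RatFunc ℝ) e / algebraMap ℝ[X] (RatFunc ℝ) (uu ^ m),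
      (stable_of_div p m hpm).1, (stable_of_div q m hqd.le).1, (stable_of_div r m hrm).1,
      (stable_of_div e m hem).1, ?_, ?_, main_sum_eq p q r e m hre, ?_⟩
    · exact div_ne_zero (RatFunc.algebraMap_ne_zero hq0)
        (RatFunc.algebraMap_ne_zero (pow_ne_zero _ uu_monic.ne_zero))
    · rw [main_div_eq p q hq0 m]; exact hTeq
    · intro _
      exact (stable_of_div q m hqd.le).2 hqd
  · set m := p.natDegree with hm
    have hpd : p.degree = (m : WithBot ℕ) := degree_eq_natDegree hp0
    have hqm : q.degree ≤ (m : WithBot ℕ) := (le_of_lt (lt_of_not_ge hprop)).trans hpd.le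
    have hab' : b * q + a * p = 1 := by linear_combination hab
    obtain ⟨r, e, hre, hrm, hem⟩ := bezout_pow q p b a hp0 hab' m hqm hpd
    have hre' : p * e + q * r = uu ^ (2 * m) := by linear_combination hre
    refine ⟨algebraMap ℝ[X] (RatFunc ℝ) p / algebraMap ℝ[X] (RatFunc ℝ) (uu ^ m),
      algebraMap ℝ[X] (RatFunc ℝ) q / algebraMap ℝ[X] (RatFunc ℝ) (uu ^ m),
      algebraMap ℝ[X] (RatFunc ℝ) e / algebraMap ℝ[X] (RatFunc ℝ) (uu ^ m),
      algebraMap ℝ[X] (RatFunc ℝ) r / algebraMap ℝ[X] (RatFunc ℝ) (uu ^ m),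
      (stable_of_div p m hpd.le).1, (stable_of_div q m hqm).1, (stable_of_div e m hem).1,
      (stable_of_div r m hrm).1, ?_, ?_, main_sum_eq p q e r m hre', ?_⟩
    · exact div_ne_zero (RatFunc.algebraMap_ne_zero hq0)
        (RatFunc.algebraMap_ne_zero (pow_ne_zero _ uu_monic.ne_zero))
    · rw [main_div_eq p q hq0 m]; exact hTeq
    · intro h
      exact absurd h hprop
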